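/- Fix a positive integer n and define p(z) = S_n(z)/S_{n-1}(z) for z ∈ (2, ∞). Then p is a strictly increasing function of z on (2, ∞). -/

import Mathlib

/-- Fix a positive integer `n`. Then `p(z) = S n z / S (n-1) z` is strictly
increasing on `(2, ∞)`. -/
theorem chebyshev_ratio_strictMonoOn (S : ℤ → ℝ → ℝ)
    (h0 : ∀ z : ℝ, S 0 z = 1) (h1 : ∀ z : ℝ, S 1 z = z)
    (hrec : ∀ (j : ℤ) (z : ℝ), S j z = z * S (j - 1) z - S (j - 2) z)
    (n : ℤ) (hn : 1 ≤ n) :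
    StrictMonoOn (fun z : ℝ => S n z / S (n - 1) z) (Set.Ioi 2) := by
  have growth : ∀ m : ℤ, 0 ≤ m → ∀ z : ℝ, 2 < z →
      1 ≤ S m z ∧ S m z < S (m + 1) z := by
    refine fun m hm => Int.le_induction
      (motive := fun k _ => ∀ z : ℝ, 2 < z → 1 ≤ S k z ∧ S k z < S (k + 1) z)
      ?_ ?_ m hm
    · intro z hz
      rw [show (0:ℤ)+1 = 1 by ring, h0, h1]
      exact ⟨le_refl 1, by linarith⟩
    · intro k hk ih z hz
      obtain ⟨h1m, h2m⟩ := ih z hz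
      have hrecm := hrec (k + 2) z
      rw [show k+2-1 = k+1 by ring, show k+2-2 = k by ring] at hrecm
      have hle : 1 ≤ S (k + 1) z := by linarith
      refine ⟨hle, ?_⟩
      rw [show k+1+1 = k+2 by ring, hrecm]
      nlinarith
  refine Int.le_induction
    (motive := fun k _ => StrictMonoOn (fun z : ℝ => S k z / S (k - 1) z) (Set.Ioi 2))
    ?_ ?_ n hn
  · intro x hx y hy hxy
    simp only [show (1:ℤ)-1 = 0 by ring, h0, h1, div_one]
    exact hxy
  · intro m hm ih
    have key : ∀ z : ℝ, 2 < z →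
        S (m + 1) z / S (m + 1 - 1) z = z - 1 / (S m z / S (m - 1) z) := by
      intro z hz
      have h1' : (1:ℝ) ≤ S (m - 1) z := (growth (m - 1) (by omega) z hz).1
      have h2' : (1:ℝ) ≤ S m z := (growth m (by omega) z hz).1
      have hr := hrec (m + 1) z
      rw [show m+1-1 = m by ring, show m+1-2 = m-1 by ring] at hr
      rw [show m+1-1 = m by ring, hr, one_div_div]
      field_simp
    intro x hx y hy hxy
    have hx2 : (2:ℝ) < x := hx
    have hy2 : (2:ℝ) < y := hy
    have hrx : S m x / S (m - 1) x > 0 := by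
      have h1' := (growth (m - 1) (by omega) x hx2).1
      have h2' := (growth m (by omega) x hx2).1
      positivity
    have hmono := ih hx hy hxy
    simp only at hmono ⊢
    rw [key x hx2, key y hy2]
    have hinv : 1 / (S m y / S (m - 1) y) < 1 / (S m x / S (m - 1) x) :=
      one_div_lt_one_div_of_lt hrx hmono
    linarith
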